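/- In the ring ℚ[q⁻¹][[t]] of formal power series in t with coefficients in the polynomial ring ℚ[q⁻¹], the series B = ∑_{d≥2} ∑_{n=1}^{d−1} (−1)^{n−1} · n · (∑_{k | gcd(n,d)} 1/k²) · q^{−n} t^d has zero constant term, and exp(B) = ∏_{ℓ≥1} ∏_{m≥1} (1 − (−1)^ℓ q^{−ℓ} t^{ℓ+m})^{ℓ}, the product converging in the t-adic topology. -/

import Mathlib

noncomputable section

open PowerSeries

/-- The formal exponential of a power series `B` (with zero constant term) in `t` over a
`ℚ`-algebra: `exp B = ∑_k B^k / k!`, where for a series of positive `t`-adic order the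
`t^d`-coefficient only receives contributions from `k ≤ d`. -/
def expT {R : Type*} [CommRing R] [Algebra ℚ R] (B : PowerSeries R) : PowerSeries R :=
  PowerSeries.mk fun d =>
    ∑ k ∈ Finset.range (d + 1), (k.factorial : ℚ)⁻¹ • coeff (R := R) d (B ^ k)

/-- We model the ring `ℚ[q⁻¹]` of polynomials in `q⁻¹` as `Polynomial ℚ`, the variable
`Polynomial.X` standing for `q⁻¹`. The series
`B = ∑_{d≥2} ∑_{n=1}^{d-1} (-1)^{n-1} n (∑_{k | gcd(n,d)} 1/k²) q^{-n} t^d ∈ ℚ[q⁻¹][[t]]`. -/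
def B9 : PowerSeries (Polynomial ℚ) :=
  PowerSeries.mk fun d =>
    ∑ n ∈ Finset.Ico 1 d,
      Polynomial.C ((-1 : ℚ) ^ (n - 1) * n * ∑ k ∈ (Nat.gcd n d).divisors, 1 / (k : ℚ) ^ 2) *
        Polynomial.X ^ n

/-- The factor `(1 - (-1)^ℓ q^{-ℓ} t^{ℓ+m})^ℓ` of the infinite product, an element of
`ℚ[q⁻¹][[t]]` (with `Polynomial.X` standing for `q⁻¹`). -/
def prodFactor9 (l m : ℕ) : PowerSeries (Polynomial ℚ) :=
  (1 - C (R := Polynomial ℚ) ((-1 : Polynomial ℚ) ^ l * Polynomial.X ^ l) * X ^ (l + m)) ^ l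

/-- The infinite product `∏_{ℓ,m ≥ 1} (1 - (-1)^ℓ q^{-ℓ} t^{ℓ+m})^ℓ`, convergent in the
`t`-adic topology: the coefficient of `t^d` equals that of any partial product over
`1 ≤ ℓ, m ≤ N` with `N ≥ d`, since the `(ℓ,m)`-factor is `≡ 1 mod t^{ℓ+m}`. -/
def prod9 : PowerSeries (Polynomial ℚ) :=
  PowerSeries.mk fun d =>
    coeff (R := Polynomial ℚ) d (∏ p ∈ Finset.Icc 1 d ×ˢ Finset.Icc 1 d, prodFactor9 p.1 p.2)

section

/-- The series `B` has zero constant term and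
`exp(B) = ∏_{ℓ,m ≥ 1} (1 - (-1)^ℓ q^{-ℓ} t^{ℓ+m})^ℓ` in `ℚ[q⁻¹][[t]]`. -/

local notation "R" => Polynomial ℚ


lemma derivEqFun (f : R⟦X⟧) : d⁄dX R f = f.derivativeFun := rfl

lemma dPow (F : PowerSeries R) : ∀ k : ℕ,
    d⁄dX R (F ^ (k + 1)) = ((k : R⟦X⟧) + 1) * (F ^ k * d⁄dX R F)
  | 0 => by simp
  | k + 1 => by
    have h : d⁄dX R (F ^ (k + 1) * F) = F ^ (k+1) • d⁄dX R F + F • d⁄dX R (F ^ (k+1)) :=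
      derivativeFun_mul _ _
    rw [← pow_succ] at h
    rw [h, dPow F k, smul_eq_mul, smul_eq_mul]
    push_cast
    ring

def c9 (l : ℕ) : R := (-1 : R) ^ l * Polynomial.X ^ l

def g9 (l s : ℕ) : PowerSeries R :=
  PowerSeries.mk fun a => if s ∣ (a + 1) then
    -((l * s : ℕ) : R) * (c9 l) ^ ((a + 1) / s) else 0

def P9 (N : ℕ) : PowerSeries R := ∏ p ∈ Finset.Icc 1 N ×ˢ Finset.Icc 1 N, prodFactor9 p.1 p.2

lemma coeff_one_sub (a : ℕ) (c : R) (s : ℕ) :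
    @coeff R _ a (1 - @C R _ c * X ^ s) = (if a = 0 then 1 else 0) - (if a = s then c else 0) := by
  rw [map_sub, coeff_one, coeff_C_mul, coeff_X_pow]
  split_ifs <;> simp

lemma gmul (l s : ℕ) (hl : 1 ≤ l) (hls : l < s) :
    g9 l s * (1 - @C R _ (c9 l) * X ^ s) =
      ((l : ℕ) : R⟦X⟧) * d⁄dX R (1 - @C R _ (c9 l) * X ^ s) := by
  have hs0 : 0 < s := by omega
  refine PowerSeries.ext fun a => ?_
  have hRHS : @coeff R _ a (((l : ℕ) : R⟦X⟧) * d⁄dX R (1 - @C R _ (c9 l) * X ^ s)) =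
      ((l : ℕ) : R) * ((if a + 1 = s then -(c9 l) else 0) * ((a : R) + 1)) := by
    rw [show (((l : ℕ)) : R⟦X⟧) = @C R _ ((l : ℕ) : R) by rw [map_natCast], coeff_C_mul,
      coeff_derivative, coeff_one_sub]
    have : ¬ (a + 1 = 0) := by omega
    split_ifs <;> simp_all
  have hLHS : @coeff R _ a (g9 l s * (1 - @C R _ (c9 l) * X ^ s)) =
      @coeff R _ a (g9 l s) - c9 l * (if s ≤ a then @coeff R _ (a - s) (g9 l s) else 0) := by
    have : g9 l s * (1 - @C R _ (c9 l) * X ^ s) = g9 l s - @C R _ (c9 l) * (g9 l s * X ^ s) := by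
      ring
    rw [this, map_sub, coeff_C_mul, coeff_mul_X_pow']
  rw [hLHS, hRHS, g9, coeff_mk, coeff_mk]
  by_cases h1 : s ∣ a + 1
  · obtain ⟨j, hj⟩ := h1
    have hj0 : 0 < j := Nat.pos_of_ne_zero (by rintro rfl; omega)
    have hdiv : (a + 1) / s = j := by rw [hj]; exact Nat.mul_div_cancel_left j hs0
    obtain ⟨i, rfl⟩ : ∃ i, j = i + 1 := ⟨j - 1, by omega⟩
    rcases Nat.eq_zero_or_pos i with hi | hi
    · -- j = 1, a + 1 = s
      subst hi
      have has : a + 1 = s := by omega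
      have hsa : ¬ s ≤ a := by omega
      rw [if_pos ⟨1, by omega⟩, if_neg hsa, if_pos has, hdiv]
      have : ((a : R) + 1) = ((s : ℕ) : R) := by
        rw [show ((s:ℕ):R) = (((a+1 : ℕ)):R) by rw [has]]; push_cast; ring
      rw [this]
      push_cast
      ring
    · -- j ≥ 2
      have hsi : s ≤ s * i := Nat.le_mul_of_pos_right s hi
      have hsa : s ≤ a := by
        have : s * (i + 1) = s * i + s := by ring
        omega
      have hne : ¬ (a + 1 = s) := by
        have h0 : 0 < s * i := Nat.mul_pos hs0 hi
        have : s * (i + 1) = s * i + s := by ring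
        omega
      have hsub : a - s + 1 = s * i := by
        have : s * (i + 1) = s * i + s := by ring
        omega
      have hdvd2 : s ∣ a - s + 1 := ⟨i, hsub⟩
      have hdiv2 : (a - s + 1) / s = i := by
        rw [hsub]; exact Nat.mul_div_cancel_left _ hs0
      rw [if_pos ⟨i + 1, hj⟩, if_pos hsa, if_pos hdvd2, if_neg hne, hdiv, hdiv2]
      rw [pow_succ]
      push_cast
      ring
  · have h2 : ¬ (a + 1 = s) := fun h => h1 (h ▸ dvd_refl s)
    rw [if_neg h1, if_neg h2]
    by_cases hsa : s ≤ a
    · have h3 : ¬ s ∣ a - s + 1 := by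
        rintro ⟨j, hj⟩
        refine h1 ⟨j + 1, ?_⟩
        have : s * (j + 1) = s * j + s := by ring
        omega
      rw [if_pos hsa, if_neg h3]
      simp
    · rw [if_neg hsa]
      simp

lemma prodFactor9_eq (l m : ℕ) :
    prodFactor9 l m = (1 - @C R _ (c9 l) * X ^ (l + m)) ^ l := rfl

lemma dFactor (l m : ℕ) (hl : 1 ≤ l) (hm : 1 ≤ m) :
    d⁄dX R (prodFactor9 l m) = g9 l (l + m) * prodFactor9 l m := by
  obtain ⟨l', rfl⟩ : ∃ l', l = l' + 1 := ⟨l - 1, by omega⟩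
  have h := gmul (l' + 1) (l' + 1 + m) (by omega) (by omega)
  have hc : ((l' : R⟦X⟧) + 1) = (((l' + 1 : ℕ)) : R⟦X⟧) := by push_cast; ring
  rw [prodFactor9_eq, dPow, hc, pow_succ]
  linear_combination (-(1 - @C R _ (c9 (l' + 1)) * X ^ (l' + 1 + m)) ^ l') * h

lemma dProd {ι : Type*} (F G : ι → R⟦X⟧) (s : Finset ι)
    (h : ∀ i ∈ s, d⁄dX R (F i) = G i * F i) :
    d⁄dX R (∏ i ∈ s, F i) = (∑ i ∈ s, G i) * ∏ i ∈ s, F i := by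
  induction s using Finset.cons_induction with
  | empty => simp
  | cons a s ha ih =>
    rw [Finset.prod_cons, Finset.sum_cons, derivEqFun, derivativeFun_mul, smul_eq_mul,
      smul_eq_mul, ← derivEqFun, ← derivEqFun,
      ih (fun i hi => h i (Finset.mem_cons.mpr (Or.inr hi))),
      h a (Finset.mem_cons_self a s)]
    ring

lemma dP9 (N : ℕ) : d⁄dX R (P9 N) =
    (∑ p ∈ Finset.Icc 1 N ×ˢ Finset.Icc 1 N, g9 p.1 (p.1 + p.2)) * P9 N := by
  refine dProd _ _ _ fun p hp => ?_
  rw [Finset.mem_product, Finset.mem_Icc, Finset.mem_Icc] at hp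
  exact dFactor p.1 p.2 hp.1.1 hp.2.1

lemma prod_sub_one_dvd {ι : Type*} (t : ℕ) (F : ι → R⟦X⟧) (s : Finset ι)
    (h : ∀ i ∈ s, (X : R⟦X⟧) ^ t ∣ F i - 1) :
    (X : R⟦X⟧) ^ t ∣ (∏ i ∈ s, F i) - 1 := by
  induction s using Finset.cons_induction with
  | empty => simp
  | cons a s ha ih =>
    rw [Finset.prod_cons]
    have h1 := h a (Finset.mem_cons_self a s)
    have h2 := ih (fun i hi => h i (Finset.mem_cons.mpr (Or.inr hi)))
    have heq : F a * (∏ i ∈ s, F i) - 1 =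
        F a * ((∏ i ∈ s, F i) - 1) + (F a - 1) := by ring
    rw [heq]
    exact dvd_add (Dvd.dvd.mul_left h2 _) h1

lemma factor_sub_one (l m t : ℕ) (h : t ≤ l + m) :
    (X : R⟦X⟧) ^ t ∣ prodFactor9 l m - 1 := by
  have h1 := sub_dvd_pow_sub_pow (1 - @C R _ (c9 l) * X ^ (l + m)) 1 l
  rw [one_pow] at h1
  have h2 : (1 - @C R _ (c9 l) * X ^ (l + m)) - 1 = -(@C R _ (c9 l)) * X ^ (l + m) := by ring
  rw [h2] at h1
  rw [prodFactor9_eq]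
  exact dvd_trans (Dvd.dvd.mul_left (pow_dvd_pow X h) _) h1

lemma coeff_stab {d N N' : ℕ} (hNN : N ≤ N') (hd : d ≤ N) :
    @coeff R _ d (P9 N') = @coeff R _ d (P9 N) := by
  have hsub : Finset.Icc 1 N ×ˢ Finset.Icc 1 N ⊆ Finset.Icc 1 N' ×ˢ Finset.Icc 1 N' := by
    apply Finset.product_subset_product <;> exact Finset.Icc_subset_Icc_right hNN
  have hP : P9 N' = (∏ p ∈ (Finset.Icc 1 N' ×ˢ Finset.Icc 1 N') \
      (Finset.Icc 1 N ×ˢ Finset.Icc 1 N), prodFactor9 p.1 p.2) * P9 N :=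
    (Finset.prod_sdiff hsub).symm
  have hdvd : (X : R⟦X⟧) ^ (d + 1) ∣ (∏ p ∈ (Finset.Icc 1 N' ×ˢ Finset.Icc 1 N') \
      (Finset.Icc 1 N ×ˢ Finset.Icc 1 N), prodFactor9 p.1 p.2) - 1 := by
    refine prod_sub_one_dvd _ _ _ fun p hp => ?_
    rw [Finset.mem_sdiff, Finset.mem_product, Finset.mem_Icc, Finset.mem_Icc] at hp
    refine factor_sub_one p.1 p.2 _ ?_
    have h2 := hp.2
    rw [Finset.mem_product, Finset.mem_Icc, Finset.mem_Icc] at h2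
    omega
  obtain ⟨E, hE⟩ := hdvd
  have heq : P9 N' = P9 N + X ^ (d + 1) * E * P9 N := by
    rw [hP]
    have h3 : (∏ p ∈ (Finset.Icc 1 N' ×ˢ Finset.Icc 1 N') \
        (Finset.Icc 1 N ×ˢ Finset.Icc 1 N), prodFactor9 p.1 p.2) = 1 + X ^ (d + 1) * E := by
      rw [← hE]; ring
    rw [h3]; ring
  rw [heq, map_add]
  have hz : @coeff R _ d ((X : R⟦X⟧) ^ (d + 1) * E * P9 N) = 0 :=
    X_pow_dvd_iff.mp ⟨E * P9 N, by rw [pow_succ]; ring⟩ d (Nat.lt_succ_self d)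
  rw [hz, add_zero]

/-- the `t2`-term -/
def t2 (d n k : ℕ) : R :=
  Polynomial.C ((-1 : ℚ) ^ (n - 1) * n * (1 / (k : ℚ) ^ 2) * d) * Polynomial.X ^ n

lemma termEq {d l m : ℕ} (hd : 0 < d) (hl : 1 ≤ l) (hm : 1 ≤ m) (hdvd : (l + m) ∣ d) :
    -(((l * (l + m) : ℕ)) : R) * c9 l ^ (d / (l + m)) =
      t2 d (l * (d / (l + m))) (d / (l + m)) := by
  set s := l + m with hs
  set k := d / s with hk
  have hs0 : 0 < s := by omega
  have hsd : s ≤ d := Nat.le_of_dvd hd hdvd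
  have hk0 : 0 < k := Nat.one_le_div_iff hs0 |>.mpr hsd
  have hdk : d = s * k := by rw [hk, Nat.mul_div_cancel' hdvd]
  set n := l * k with hn
  have hn0 : 0 < n := Nat.mul_pos (by omega) hk0
  -- LHS as C(scalar) * X^n
  have hL : -(((l * s : ℕ)) : R) * c9 l ^ k =
      Polynomial.C (-((l : ℚ) * s) * (-1 : ℚ) ^ n) * Polynomial.X ^ n := by
    rw [c9, mul_pow, ← pow_mul, ← pow_mul, ← hn]
    rw [show ((-1 : R) ^ n) = Polynomial.C ((-1 : ℚ) ^ n) by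
      rw [map_pow, map_neg, map_one]]
    simp only [map_mul, map_neg, map_pow, map_one, map_natCast]
    push_cast
    ring
  have hneg : (-1 : ℚ) ^ n = -(-1 : ℚ) ^ (n - 1) := by
    rw [show n = (n - 1) + 1 by omega, pow_succ]
    simp
  have hkQ : ((k : ℚ)) ≠ 0 := by exact_mod_cast hk0.ne'
  have hnQ : ((n : ℚ)) = (l : ℚ) * k := by exact_mod_cast congrArg Nat.cast hn
  have hdQ : ((d : ℚ)) = (s : ℚ) * k := by exact_mod_cast congrArg Nat.cast hdk
  have hsc : -((l : ℚ) * s) * (-1 : ℚ) ^ n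
      = (-1 : ℚ) ^ (n - 1) * (n : ℚ) * (1 / (k : ℚ) ^ 2) * (d : ℚ) := by
    rw [hneg, hnQ, hdQ]
    field_simp
  rw [hL, t2, hsc]

lemma cG (a N : ℕ) (hN : a < N) :
    @coeff R _ a (∑ p ∈ Finset.Icc 1 N ×ˢ Finset.Icc 1 N, g9 p.1 (p.1 + p.2)) =
      @coeff R _ a (d⁄dX R B9) := by
  set d := a + 1 with hdd
  have hd : 0 < d := by omega
  -- LHS
  have hLHS : @coeff R _ a (∑ p ∈ Finset.Icc 1 N ×ˢ Finset.Icc 1 N, g9 p.1 (p.1 + p.2)) =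
      ∑ p ∈ (Finset.Icc 1 N ×ˢ Finset.Icc 1 N).filter (fun p => (p.1 + p.2) ∣ d),
        -(((p.1 * (p.1 + p.2) : ℕ)) : R) * c9 p.1 ^ (d / (p.1 + p.2)) := by
    rw [map_sum, Finset.sum_filter]
    exact Finset.sum_congr rfl fun p _ => by rw [g9, coeff_mk]
  -- RHS
  have hRHS : @coeff R _ a (d⁄dX R B9) =
      ∑ n ∈ Finset.Ico 1 d, ∑ k ∈ (Nat.gcd n d).divisors, t2 d n k := by
    rw [coeff_derivative, B9, coeff_mk, ← hdd, Finset.sum_mul]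
    refine Finset.sum_congr rfl fun n _ => ?_
    have hC : ((a : R) + 1) = Polynomial.C ((d : ℚ)) := by
      rw [show Polynomial.C ((d:ℚ)) = ((d : ℕ) : R) by rw [← Polynomial.C_eq_natCast], hdd]
      push_cast
      ring
    rw [hC, mul_right_comm, ← map_mul]
    have hq : ((-1 : ℚ) ^ (n - 1) * n * ∑ k ∈ (Nat.gcd n d).divisors, 1 / (k : ℚ) ^ 2) * d
        = ∑ k ∈ (Nat.gcd n d).divisors, (-1 : ℚ) ^ (n - 1) * n * (1 / (k : ℚ) ^ 2) * d := by
      rw [Finset.mul_sum, Finset.sum_mul]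
    rw [hq, map_sum, Finset.sum_mul]
    rfl
  rw [hLHS, hRHS, Finset.sum_sigma']
  refine Finset.sum_nbij' (fun p => ⟨p.1 * (d / (p.1 + p.2)), d / (p.1 + p.2)⟩)
    (fun x => (x.1 / x.2, d / x.2 - x.1 / x.2)) ?_ ?_ ?_ ?_ ?_
  · -- forward membership
    rintro ⟨l, m⟩ hp
    rw [Finset.mem_filter, Finset.mem_product, Finset.mem_Icc, Finset.mem_Icc] at hp
    obtain ⟨⟨⟨hl1, hlN⟩, hm1, hmN⟩, hdvd⟩ := hp
    have hs0 : 0 < l + m := by omega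
    have hsd : l + m ≤ d := Nat.le_of_dvd hd hdvd
    have hk0 : 0 < d / (l + m) := (Nat.one_le_div_iff hs0).mpr hsd
    have hdk : d = (l + m) * (d / (l + m)) := (Nat.mul_div_cancel' hdvd).symm
    rw [Finset.mem_sigma, Finset.mem_Ico]
    dsimp only
    refine ⟨⟨Nat.mul_pos (by omega) hk0, ?_⟩, ?_⟩
    · calc l * (d / (l + m)) < (l + m) * (d / (l + m)) :=
            (Nat.mul_lt_mul_right hk0).mpr (by omega)
        _ = d := hdk.symm
    · rw [Nat.mem_divisors]
      refine ⟨Nat.dvd_gcd (dvd_mul_left _ _) (Nat.div_dvd_of_dvd hdvd), ?_⟩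
      exact (Nat.gcd_pos_of_pos_right _ hd).ne'
  · -- backward membership
    rintro ⟨n, k⟩ hx
    rw [Finset.mem_sigma, Finset.mem_Ico, Nat.mem_divisors] at hx
    dsimp only at hx ⊢
    obtain ⟨⟨hn1, hnd⟩, hkg, _⟩ := hx
    have hkn : k ∣ n := hkg.trans (Nat.gcd_dvd_left n d)
    have hkd : k ∣ d := hkg.trans (Nat.gcd_dvd_right n d)
    have hk0 : 0 < k := Nat.pos_of_dvd_of_pos hkn (by omega)
    have hl1 : 1 ≤ n / k := (Nat.one_le_div_iff hk0).mpr (Nat.le_of_dvd (by omega) hkn)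
    have hlt : n / k < d / k := Nat.div_lt_div_of_lt_of_dvd hkd hnd
    rw [Finset.mem_filter, Finset.mem_product, Finset.mem_Icc, Finset.mem_Icc]
    have hdkd : d / k ≤ d := Nat.div_le_self d k
    refine ⟨⟨⟨hl1, ?_⟩, by omega, by omega⟩, ?_⟩
    · have : n / k ≤ n := Nat.div_le_self n k
      omega
    · have : n / k + (d / k - n / k) = d / k := by omega
      rw [this]
      exact Nat.div_dvd_of_dvd hkd
  · -- left inverse
    rintro ⟨l, m⟩ hp
    rw [Finset.mem_filter, Finset.mem_product, Finset.mem_Icc, Finset.mem_Icc] at hp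
    obtain ⟨⟨⟨hl1, hlN⟩, hm1, hmN⟩, hdvd⟩ := hp
    have hs0 : 0 < l + m := by omega
    have hsd : l + m ≤ d := Nat.le_of_dvd hd hdvd
    have hk0 : 0 < d / (l + m) := (Nat.one_le_div_iff hs0).mpr hsd
    have h1 : l * (d / (l + m)) / (d / (l + m)) = l := Nat.mul_div_cancel l hk0
    have h2 : d / (d / (l + m)) = l + m := Nat.div_div_self hdvd (by omega)
    dsimp only
    simp only [h1, h2]
    have h3 : l + m - l = m := by omega
    rw [h3]
  · -- right inverse
    rintro ⟨n, k⟩ hx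
    rw [Finset.mem_sigma, Finset.mem_Ico, Nat.mem_divisors] at hx
    dsimp only at hx ⊢
    obtain ⟨⟨hn1, hnd⟩, hkg, _⟩ := hx
    have hkn : k ∣ n := hkg.trans (Nat.gcd_dvd_left n d)
    have hkd : k ∣ d := hkg.trans (Nat.gcd_dvd_right n d)
    have hk0 : 0 < k := Nat.pos_of_dvd_of_pos hkn (by omega)
    have hlt : n / k < d / k := Nat.div_lt_div_of_lt_of_dvd hkd hnd
    have hsum : n / k + (d / k - n / k) = d / k := by omega
    have h2 : d / (d / k) = k := Nat.div_div_self hkd (by omega)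
    have h3 : n / k * k = n := Nat.div_mul_cancel hkn
    simp only [hsum, h2, h3]
  · -- terms agree
    rintro ⟨l, m⟩ hp
    rw [Finset.mem_filter, Finset.mem_product, Finset.mem_Icc, Finset.mem_Icc] at hp
    obtain ⟨⟨⟨hl1, hlN⟩, hm1, hmN⟩, hdvd⟩ := hp
    exact termEq hd hl1 hm1 hdvd
lemma coeff_pow_eq_zero' {F : PowerSeries R} (hF : @constantCoeff R _ F = 0)
    {d k : ℕ} (h : d < k) : @coeff R _ d (F ^ k) = 0 := by
  have hd : (X : PowerSeries R) ^ k ∣ F ^ k := pow_dvd_pow_of_dvd (X_dvd_iff.mpr hF) k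
  exact (X_pow_dvd_iff.mp hd) d h

lemma constantCoeff_expT (B : PowerSeries R) : @constantCoeff R _ (expT B) = 1 := by
  rw [← coeff_zero_eq_constantCoeff_apply, expT, coeff_mk]
  simp

lemma derivative_expT {B : PowerSeries R} (hB : @constantCoeff R _ B = 0) :
    d⁄dX R (expT B) = (d⁄dX R B) * expT B := by
  refine PowerSeries.ext fun n => ?_
  have key : ∀ j : ℕ, @coeff R _ (n + 1) (B ^ (j + 1)) * ((n : R) + 1)
      = ((j : R) + 1) * @coeff R _ n (B ^ j * d⁄dX R B) := by
    intro j
    have h := coeff_derivative (B ^ (j + 1)) n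
    rw [dPow] at h
    rw [show ((j : R⟦X⟧) + 1) = @C R _ ((j : R) + 1) by
      rw [map_add, map_one, map_natCast], coeff_C_mul] at h
    exact h.symm
  calc @coeff R _ n (d⁄dX R (expT B))
      = ∑ k ∈ Finset.range (n + 2), (k.factorial : ℚ)⁻¹ • (@coeff R _ (n+1) (B ^ k) * ((n:R)+1)) := by
        rw [coeff_derivative, expT, coeff_mk, Finset.sum_mul]
        exact Finset.sum_congr rfl fun k _ => (smul_mul_assoc _ _ _)
    _ = ∑ j ∈ Finset.range (n + 1),
          ((j+1).factorial : ℚ)⁻¹ • (((j : R) + 1) * @coeff R _ n (B ^ j * d⁄dX R B)) := by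
        rw [Finset.sum_range_succ']
        simp only [key]
        simp [Nat.factorial_zero]
    _ = ∑ j ∈ Finset.range (n + 1), (j.factorial : ℚ)⁻¹ • @coeff R _ n ((d⁄dX R B) * B ^ j) := by
        refine Finset.sum_congr rfl fun j _ => ?_
        rw [mul_comm (B ^ j)]
        set x := @coeff R _ n (d⁄dX R B * B ^ j) with hx
        have h1 : ((j : R) + 1) * x = ((j + 1 : ℕ) : ℚ) • x := by
          rw [Nat.cast_smul_eq_nsmul, nsmul_eq_mul]
          push_cast
          ring
        rw [h1, smul_smul]
        congr 1
        have hj : ((j : ℚ) + 1) ≠ 0 := by positivity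
        have hf : ((j.factorial : ℚ)) ≠ 0 := by
          exact_mod_cast Nat.factorial_ne_zero j
        rw [Nat.factorial_succ]
        push_cast
        field_simp
    _ = @coeff R _ n ((d⁄dX R B) * expT B) := by
        rw [coeff_mul]
        have : ∀ p ∈ Finset.HasAntidiagonal.antidiagonal n,
            @coeff R _ p.1 (d⁄dX R B) * @coeff R _ p.2 (expT B)
            = ∑ k ∈ Finset.range (n+1), (k.factorial : ℚ)⁻¹ •
                (@coeff R _ p.1 (d⁄dX R B) * @coeff R _ p.2 (B ^ k)) := by
          intro p hp
          have hple : p.2 + 1 ≤ n + 1 :=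
            Nat.succ_le_succ (Finset.HasAntidiagonal.antidiagonal.snd_le hp)
          rw [expT, coeff_mk, Finset.mul_sum]
          rw [Finset.sum_subset (Finset.range_subset_range.mpr hple)]
          · exact Finset.sum_congr rfl fun k _ => mul_smul_comm _ _ _
          · intro k hk hk2
            rw [coeff_pow_eq_zero' hB (by simpa using hk2)]
            simp
        rw [Finset.sum_congr rfl this, Finset.sum_comm]
        refine (Finset.sum_congr rfl fun k _ => ?_).symm
        rw [coeff_mul, Finset.smul_sum]


lemma ode_unique {E F G : PowerSeries R} (hF : d⁄dX R F = E * F) (hG : d⁄dX R G = E * G)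
    (hc : @constantCoeff R _ F = @constantCoeff R _ G) : F = G := by
  refine PowerSeries.ext fun n => ?_
  induction n using Nat.strong_induction_on with
  | _ n ih =>
    match n with
    | 0 => simpa using hc
    | n + 1 =>
      have h1 : @coeff R _ n (d⁄dX R F) = @coeff R _ n (d⁄dX R G) := by
        rw [hF, hG, coeff_mul, coeff_mul]
        refine Finset.sum_congr rfl fun p hp => ?_
        have hp2 : p.2 < n + 1 :=
          Nat.lt_succ_of_le (Finset.HasAntidiagonal.antidiagonal.snd_le hp)
        rw [ih p.2 hp2]
      rw [coeff_derivative, coeff_derivative] at h1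
      have hne : ((n : R) + 1) ≠ 0 := by
        have h : ((n + 1 : ℕ) : R) ≠ 0 := Nat.cast_ne_zero.mpr n.succ_ne_zero
        push_cast at h; exact h
      exact mul_right_cancel₀ hne h1

lemma coeff_prod9_eq (e : ℕ) : @coeff R _ e prod9 = @coeff R _ e (P9 e) := by
  rw [prod9, coeff_mk]
  rfl

lemma derivative_prod9 : d⁄dX R prod9 = (d⁄dX R B9) * prod9 := by
  refine PowerSeries.ext fun n => ?_
  have h1 : @coeff R _ n (d⁄dX R prod9) = @coeff R _ n (d⁄dX R (P9 (n + 1))) := by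
    rw [coeff_derivative, coeff_derivative, coeff_prod9_eq]
  rw [h1, dP9, coeff_mul, coeff_mul]
  refine Finset.sum_congr rfl fun p hp => ?_
  have hab : p.1 + p.2 = n := Finset.HasAntidiagonal.mem_antidiagonal.mp hp
  rw [cG p.1 (n + 1) (by omega), coeff_prod9_eq,
    coeff_stab (N := p.2) (by omega) le_rfl]

lemma constantCoeff_prod9 : @constantCoeff R _ prod9 = 1 := by
  rw [← coeff_zero_eq_constantCoeff_apply, coeff_prod9_eq]
  have : Finset.Icc 1 0 = (∅ : Finset ℕ) := Finset.Icc_eq_empty (by omega)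
  rw [P9, this]
  simp

lemma constantCoeff_B9 : @constantCoeff R _ B9 = 0 := by
  rw [← coeff_zero_eq_constantCoeff_apply, B9, coeff_mk]
  simp

end

theorem exp_eq_prod_inverse_side :
    constantCoeff (R := Polynomial ℚ) B9 = 0 ∧ expT B9 = prod9 := by
  refine ⟨constantCoeff_B9, ?_⟩
  refine ode_unique (E := d⁄dX (Polynomial ℚ) B9) (derivative_expT constantCoeff_B9)
    derivative_prod9 ?_
  rw [constantCoeff_expT, constantCoeff_prod9]

end
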